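/- With A the quantum complete intersection as below: (i) the set {x^i y^j : 0 ≤ i,j ≤ p−1, (e divides both i and j) or i = p−1 or j = p−1} is a k-basis of the center Z(A); in particular dim_k Z(A) = ((p−1)/e)² + 2p − 1; (ii) the socle of Z(A), i.e. soc(Z(A)) = {z ∈ Z(A) : z·m = 0 for all m in the maximal ideal J(A) ∩ Z(A) of Z(A)}, has k-basis {x^i y^{p−1}, x^{p−1} y^j : p−e ≤ i, j ≤ p−1}, so dim_k soc(Z(A)) = 2e − 1; (iii) J(A) ∩ Z(A) ⊆ J(A)^e. -/

import Mathlib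

/-- The socle of the (local, commutative) center `Z(A)`, i.e. the set of central elements
annihilated by the maximal ideal `J(A) ∩ Z(A)` of `Z(A)`. -/
def socCenter (k : Type*) [CommRing k] (A : Type*) [Ring A] [Algebra k A] :
    Submodule k A where
  carrier := {z | z ∈ Subalgebra.center k A ∧
    ∀ m ∈ Subalgebra.center k A, m ∈ Ideal.jacobson (⊥ : Ideal A) → z * m = 0}
  add_mem' := by
    rintro a b ⟨haZ, ha⟩ ⟨hbZ, hb⟩
    exact ⟨Subalgebra.add_mem _ haZ hbZ, fun m hmZ hmJ => by
      rw [add_mul, ha m hmZ hmJ, hb m hmZ hmJ, add_zero]⟩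
  zero_mem' := ⟨Subalgebra.zero_mem _, fun m _ _ => zero_mul m⟩
  smul_mem' := by
    rintro c a ⟨haZ, ha⟩
    exact ⟨Subalgebra.smul_mem _ haZ c, fun m hmZ hmJ => by
      rw [smul_mul_assoc, ha m hmZ hmJ, smul_zero]⟩

section QCI


variable {k : Type*} [Field k] {p e : ℕ} {q : k}
variable {A : Type*} [Ring A] [Algebra k A] {x y : A}

lemma qci_pow_x_zero (hx : x ^ p = 0) {i : ℕ} (hi : p ≤ i) : x ^ i = 0 := by
  obtain ⟨d, rfl⟩ := Nat.exists_eq_add_of_le hi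
  rw [pow_add, hx, zero_mul]

lemma qci_swap1 (hyx : y * x = q • (x * y)) (i : ℕ) :
    y * x ^ i = (q ^ i) • (x ^ i * y) := by
  induction i with
  | zero => simp
  | succ n ih =>
    rw [pow_succ, ← mul_assoc, ih, smul_mul_assoc, mul_assoc, hyx, mul_smul_comm,
      pow_succ, mul_smul, ← mul_assoc]

lemma qci_swap (hyx : y * x = q • (x * y)) (i j : ℕ) :
    y ^ j * x ^ i = (q ^ (i * j)) • (x ^ i * y ^ j) := by
  induction j with
  | zero => simp
  | succ n ih =>
    rw [pow_succ, mul_assoc, qci_swap1 hyx, mul_smul_comm, ← mul_assoc, ih,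
      smul_mul_assoc, mul_assoc, ← pow_succ, Nat.mul_succ, smul_smul, ← pow_add,
      Nat.add_comm i]

lemma qci_mul_mono (hyx : y * x = q • (x * y)) (i j a c : ℕ) :
    (x ^ i * y ^ j) * (x ^ a * y ^ c) = (q ^ (a * j)) • (x ^ (i + a) * y ^ (j + c)) := by
  rw [mul_assoc, ← mul_assoc (y ^ j), qci_swap hyx, smul_mul_assoc, mul_smul_comm,
    ← mul_assoc, ← mul_assoc, ← pow_add, mul_assoc, ← pow_add]


lemma qci_mono_zero (hx : x ^ p = 0) (hy : y ^ p = 0) {i j : ℕ} (h : p ≤ i ∨ p ≤ j) :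
    x ^ i * y ^ j = 0 := by
  rcases h with h | h
  · rw [qci_pow_x_zero hx h, zero_mul]
  · obtain ⟨d, rfl⟩ := Nat.exists_eq_add_of_le h
    rw [pow_add, hy, zero_mul, mul_zero]

lemma qci_repr_mono (b : Module.Basis (Fin p × Fin p) k A)
    (hb : ∀ ij : Fin p × Fin p, b ij = x ^ (ij.1 : ℕ) * y ^ (ij.2 : ℕ))
    {i j : ℕ} (hi : i < p) (hj : j < p) (pt : Fin p × Fin p) :
    b.repr (x ^ i * y ^ j) pt = if pt = (⟨i, hi⟩, ⟨j, hj⟩) then 1 else 0 := by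
  rw [show x ^ i * y ^ j = b (⟨i, hi⟩, ⟨j, hj⟩) by rw [hb], b.repr_self,
    Finsupp.single_apply]
  simp [eq_comm]

/-- Master right-multiplication coefficient lemma. -/
lemma qci_repr_mul_right (hx : x ^ p = 0) (hy : y ^ p = 0) (hyx : y * x = q • (x * y))
    (b : Module.Basis (Fin p × Fin p) k A)
    (hb : ∀ ij : Fin p × Fin p, b ij = x ^ (ij.1 : ℕ) * y ^ (ij.2 : ℕ))
    (z : A) (s t i j : ℕ) (his : i + s < p) (hjt : j + t < p) :
    b.repr (z * (x ^ s * y ^ t)) (⟨i + s, his⟩, ⟨j + t, hjt⟩) =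
      q ^ (s * j) * b.repr z (⟨i, by omega⟩, ⟨j, by omega⟩) := by
  set pt : Fin p × Fin p := (⟨i + s, his⟩, ⟨j + t, hjt⟩)
  have hz : z = ∑ uv : Fin p × Fin p, b.repr z uv • b uv := (b.sum_repr z).symm
  have expand : b.repr (z * (x ^ s * y ^ t)) pt =
      ∑ uv : Fin p × Fin p, b.repr z uv * b.repr (b uv * (x ^ s * y ^ t)) pt := by
    conv_lhs => rw [hz]
    rw [Finset.sum_mul]
    simp_rw [smul_mul_assoc]
    rw [map_sum, Finsupp.coe_finset_sum, Finset.sum_apply]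
    simp [Finsupp.smul_apply, smul_eq_mul]
  rw [expand]
  rw [Finset.sum_eq_single ((⟨i, by omega⟩ : Fin p), (⟨j, by omega⟩ : Fin p))]
  · rw [hb, qci_mul_mono hyx, map_smul, Finsupp.smul_apply, smul_eq_mul,
      qci_repr_mono b hb (by simpa using his) (by simpa using hjt) pt, if_pos rfl,
      mul_one, mul_comm]
  · rintro ⟨u, v⟩ _ hne
    rw [hb, qci_mul_mono hyx]
    dsimp only
    by_cases hup : (u : ℕ) + s < p ∧ (v : ℕ) + t < p
    · rw [map_smul, Finsupp.smul_apply, smul_eq_mul,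
        qci_repr_mono b hb hup.1 hup.2 pt, if_neg, mul_zero, mul_zero]
      intro hpt
      apply hne
      have h1 : i + s = (u : ℕ) + s := congrArg (fun w : Fin p × Fin p => (w.1 : ℕ)) hpt
      have h2 : j + t = (v : ℕ) + t := congrArg (fun w : Fin p × Fin p => (w.2 : ℕ)) hpt
      have hu : (u : ℕ) = i := by omega
      have hv : (v : ℕ) = j := by omega
      ext
      · simpa using hu
      · simpa using hv
    · rw [qci_mono_zero hx hy (by omega), smul_zero, map_zero, Finsupp.coe_zero,
        Pi.zero_apply, mul_zero]
  · intro h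
    exact absurd (Finset.mem_univ _) h

/-- Master left-multiplication coefficient lemma. -/
lemma qci_repr_mul_left (hx : x ^ p = 0) (hy : y ^ p = 0) (hyx : y * x = q • (x * y))
    (b : Module.Basis (Fin p × Fin p) k A)
    (hb : ∀ ij : Fin p × Fin p, b ij = x ^ (ij.1 : ℕ) * y ^ (ij.2 : ℕ))
    (z : A) (s t i j : ℕ) (his : s + i < p) (hjt : t + j < p) :
    b.repr ((x ^ s * y ^ t) * z) (⟨s + i, his⟩, ⟨t + j, hjt⟩) =
      q ^ (i * t) * b.repr z (⟨i, by omega⟩, ⟨j, by omega⟩) := by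
  set pt : Fin p × Fin p := (⟨s + i, his⟩, ⟨t + j, hjt⟩)
  have hz : z = ∑ uv : Fin p × Fin p, b.repr z uv • b uv := (b.sum_repr z).symm
  have expand : b.repr ((x ^ s * y ^ t) * z) pt =
      ∑ uv : Fin p × Fin p, b.repr z uv * b.repr ((x ^ s * y ^ t) * b uv) pt := by
    conv_lhs => rw [hz]
    rw [Finset.mul_sum]
    simp_rw [mul_smul_comm]
    rw [map_sum, Finsupp.coe_finset_sum, Finset.sum_apply]
    simp [Finsupp.smul_apply, smul_eq_mul]
  rw [expand]
  rw [Finset.sum_eq_single ((⟨i, by omega⟩ : Fin p), (⟨j, by omega⟩ : Fin p))]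
  · rw [hb, qci_mul_mono hyx, map_smul, Finsupp.smul_apply, smul_eq_mul,
      qci_repr_mono b hb (by simpa using his) (by simpa using hjt) pt, if_pos rfl,
      mul_one, mul_comm]
  · rintro ⟨u, v⟩ _ hne
    rw [hb, qci_mul_mono hyx]
    dsimp only
    by_cases hup : s + (u : ℕ) < p ∧ t + (v : ℕ) < p
    · rw [map_smul, Finsupp.smul_apply, smul_eq_mul,
        qci_repr_mono b hb hup.1 hup.2 pt, if_neg, mul_zero, mul_zero]
      intro hpt
      apply hne
      have h1 : s + i = s + (u : ℕ) := congrArg (fun w : Fin p × Fin p => (w.1 : ℕ)) hpt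
      have h2 : t + j = t + (v : ℕ) := congrArg (fun w : Fin p × Fin p => (w.2 : ℕ)) hpt
      have hu : (u : ℕ) = i := by omega
      have hv : (v : ℕ) = j := by omega
      ext
      · simpa using hu
      · simpa using hv
    · rw [qci_mono_zero hx hy (by omega), smul_zero, map_zero, Finsupp.coe_zero,
        Pi.zero_apply, mul_zero]
  · intro h
    exact absurd (Finset.mem_univ _) h


lemma qci_expand_right (b : Module.Basis (Fin p × Fin p) k A) (z m : A) (pt : Fin p × Fin p) :
    b.repr (z * m) pt = ∑ uv : Fin p × Fin p, b.repr z uv * b.repr (b uv * m) pt := by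
  conv_lhs => rw [show z = ∑ uv : Fin p × Fin p, b.repr z uv • b uv from (b.sum_repr z).symm]
  rw [Finset.sum_mul]
  simp_rw [smul_mul_assoc]
  rw [map_sum, Finsupp.coe_finset_sum, Finset.sum_apply]
  simp [Finsupp.smul_apply, smul_eq_mul]

lemma qci_expand_left (b : Module.Basis (Fin p × Fin p) k A) (z m : A) (pt : Fin p × Fin p) :
    b.repr (m * z) pt = ∑ uv : Fin p × Fin p, b.repr z uv * b.repr (m * b uv) pt := by
  conv_lhs => rw [show z = ∑ uv : Fin p × Fin p, b.repr z uv • b uv from (b.sum_repr z).symm]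
  rw [Finset.mul_sum]
  simp_rw [mul_smul_comm]
  rw [map_sum, Finsupp.coe_finset_sum, Finset.sum_apply]
  simp [Finsupp.smul_apply, smul_eq_mul]

/-- The coefficient of a positive-degree monomial at `(0,0)` is zero. -/
lemma qci_repr00_mono (hp : 2 ≤ p) (hx : x ^ p = 0) (hy : y ^ p = 0)
    (b : Module.Basis (Fin p × Fin p) k A)
    (hb : ∀ ij : Fin p × Fin p, b ij = x ^ (ij.1 : ℕ) * y ^ (ij.2 : ℕ))
    {i j : ℕ} (hij : 1 ≤ i + j) :
    b.repr (x ^ i * y ^ j) (⟨0, by omega⟩, ⟨0, by omega⟩) = 0 := by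
  by_cases h : i < p ∧ j < p
  · rw [qci_repr_mono b hb h.1 h.2, if_neg]
    intro hpt
    have h1 : (0 : ℕ) = i := congrArg (fun w : Fin p × Fin p => (w.1 : ℕ)) hpt
    have h2 : (0 : ℕ) = j := congrArg (fun w : Fin p × Fin p => (w.2 : ℕ)) hpt
    omega
  · rw [qci_mono_zero hx hy (by omega), map_zero, Finsupp.coe_zero, Pi.zero_apply]

lemma qci_repr00_mul_right (hp : 2 ≤ p) (hx : x ^ p = 0) (hy : y ^ p = 0) (hyx : y * x = q • (x * y))
    (b : Module.Basis (Fin p × Fin p) k A)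
    (hb : ∀ ij : Fin p × Fin p, b ij = x ^ (ij.1 : ℕ) * y ^ (ij.2 : ℕ))
    {z : A} (hz : b.repr z (⟨0, by omega⟩, ⟨0, by omega⟩) = 0) (a : A) :
    b.repr (z * a) (⟨0, by omega⟩, ⟨0, by omega⟩) = 0 := by
  rw [qci_expand_right b z a]
  apply Finset.sum_eq_zero
  rintro ⟨u, v⟩ -
  by_cases huv : ((u, v) : Fin p × Fin p) = (⟨0, by omega⟩, ⟨0, by omega⟩)
  · rw [huv, hz, zero_mul]
  · rw [qci_expand_left b a (b (u, v))]
    rw [show (∑ ab : Fin p × Fin p, b.repr a ab *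
        b.repr (b (u, v) * b ab) (⟨0, by omega⟩, ⟨0, by omega⟩)) = 0
      from Finset.sum_eq_zero ?_, mul_zero]
    rintro ⟨s, t⟩ -
    rw [hb, hb, qci_mul_mono hyx, map_smul, Finsupp.smul_apply,
      qci_repr00_mono hp hx hy b hb ?_, smul_zero, mul_zero]
    dsimp only
    have : ¬((u : ℕ) = 0 ∧ (v : ℕ) = 0) := by
      intro ⟨h1, h2⟩
      exact huv (by ext <;> simpa)
    omega

lemma qci_repr00_mul_left (hp : 2 ≤ p) (hx : x ^ p = 0) (hy : y ^ p = 0) (hyx : y * x = q • (x * y))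
    (b : Module.Basis (Fin p × Fin p) k A)
    (hb : ∀ ij : Fin p × Fin p, b ij = x ^ (ij.1 : ℕ) * y ^ (ij.2 : ℕ))
    {z : A} (hz : b.repr z (⟨0, by omega⟩, ⟨0, by omega⟩) = 0) (a : A) :
    b.repr (a * z) (⟨0, by omega⟩, ⟨0, by omega⟩) = 0 := by
  rw [qci_expand_left b z a]
  apply Finset.sum_eq_zero
  rintro ⟨u, v⟩ -
  by_cases huv : ((u, v) : Fin p × Fin p) = (⟨0, by omega⟩, ⟨0, by omega⟩)
  · rw [huv, hz, zero_mul]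
  · rw [qci_expand_right b a (b (u, v))]
    rw [show (∑ ab : Fin p × Fin p, b.repr a ab *
        b.repr (b ab * b (u, v)) (⟨0, by omega⟩, ⟨0, by omega⟩)) = 0
      from Finset.sum_eq_zero ?_, mul_zero]
    rintro ⟨s, t⟩ -
    rw [hb, hb, qci_mul_mono hyx, map_smul, Finsupp.smul_apply,
      qci_repr00_mono hp hx hy b hb ?_, smul_zero, mul_zero]
    dsimp only
    have : ¬((u : ℕ) = 0 ∧ (v : ℕ) = 0) := by
      intro ⟨h1, h2⟩
      exact huv (by ext <;> simpa)
    omega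


variable (q) in
/-- The span of nonconstant monomials as an ideal: elements with zero constant coefficient. -/
def qciNI (hp : 2 ≤ p) (hx : x ^ p = 0) (hy : y ^ p = 0) (hyx : y * x = q • (x * y))
    (b : Module.Basis (Fin p × Fin p) k A)
    (hb : ∀ ij : Fin p × Fin p, b ij = x ^ (ij.1 : ℕ) * y ^ (ij.2 : ℕ)) : Ideal A where
  carrier := {z | b.repr z (⟨0, by omega⟩, ⟨0, by omega⟩) = 0}
  add_mem' ha hc := by simp_all
  zero_mem' := by simp
  smul_mem' c z hz := by
    simpa [smul_eq_mul] using qci_repr00_mul_left hp hx hy hyx b hb hz c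

/-- Degree filtration. -/
def qciD (b : Module.Basis (Fin p × Fin p) k A) (d : ℕ) : Submodule k A :=
  Submodule.span k (⇑b '' {ij : Fin p × Fin p | d ≤ (ij.1 : ℕ) + (ij.2 : ℕ)})

lemma qciNI_le_D1 (hp : 2 ≤ p) (hx : x ^ p = 0) (hy : y ^ p = 0)
    (hyx : y * x = q • (x * y)) (b : Module.Basis (Fin p × Fin p) k A) (hb : ∀ ij : Fin p × Fin p, b ij = x ^ (ij.1 : ℕ) * y ^ (ij.2 : ℕ))
    {z : A} (hz : z ∈ qciNI q hp hx hy hyx b hb) : z ∈ qciD b 1 := by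
  rw [show z = ∑ uv : Fin p × Fin p, b.repr z uv • b uv from (b.sum_repr z).symm]
  apply Submodule.sum_mem
  rintro ⟨u, v⟩ -
  by_cases huv : ((u, v) : Fin p × Fin p) = (⟨0, by omega⟩, ⟨0, by omega⟩)
  · rw [huv, hz, zero_smul]
    exact Submodule.zero_mem _
  · apply Submodule.smul_mem
    apply Submodule.subset_span
    refine ⟨(u, v), show 1 ≤ (u : ℕ) + (v : ℕ) from ?_, rfl⟩
    have : ¬((u : ℕ) = 0 ∧ (v : ℕ) = 0) := by
      intro ⟨h1, h2⟩
      exact huv (by ext <;> simpa)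
    omega

lemma qciD_mul (b : Module.Basis (Fin p × Fin p) k A) (hx : x ^ p = 0) (hy : y ^ p = 0) (hyx : y * x = q • (x * y))
    (hb : ∀ ij : Fin p × Fin p, b ij = x ^ (ij.1 : ℕ) * y ^ (ij.2 : ℕ))
    {d : ℕ} {z w : A} (hz : z ∈ qciD b 1) (hw : w ∈ qciD b d) :
    z * w ∈ qciD b (d + 1) := by
  induction hz using Submodule.span_induction with
  | mem z hzmem =>
    induction hw using Submodule.span_induction with
    | mem w hwmem =>
      obtain ⟨⟨i, j⟩, hij, rfl⟩ := hzmem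
      obtain ⟨⟨a, c⟩, hac, rfl⟩ := hwmem
      have hij' : 1 ≤ (i : ℕ) + (j : ℕ) := hij
      have hac' : d ≤ (a : ℕ) + (c : ℕ) := hac
      rw [hb, hb, qci_mul_mono hyx]
      apply Submodule.smul_mem
      by_cases hlt : ((i : ℕ) + (a : ℕ) < p) ∧ ((j : ℕ) + (c : ℕ) < p)
      · have : x ^ ((i : ℕ) + (a : ℕ)) * y ^ ((j : ℕ) + (c : ℕ)) =
            b (⟨(i : ℕ) + a, hlt.1⟩, ⟨(j : ℕ) + c, hlt.2⟩) := by rw [hb]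
        rw [this]
        apply Submodule.subset_span
        refine ⟨_, ?_, rfl⟩
        show d + 1 ≤ (i : ℕ) + (a : ℕ) + ((j : ℕ) + (c : ℕ))
        omega
      · rw [qci_mono_zero hx hy (by dsimp only; omega)]
        exact Submodule.zero_mem _
    | zero => rw [mul_zero]; exact Submodule.zero_mem _
    | add w1 w2 h1 h2 p1 p2 => rw [mul_add]; exact Submodule.add_mem _ p1 p2
    | smul a w1 h1 p1 => rw [mul_smul_comm]; exact Submodule.smul_mem _ _ p1
  | zero => rw [zero_mul]; exact Submodule.zero_mem _
  | add z1 z2 h1 h2 p1 p2 => rw [add_mul]; exact Submodule.add_mem _ p1 p2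
  | smul a z1 h1 p1 => rw [smul_mul_assoc]; exact Submodule.smul_mem _ _ p1

lemma qciD_pow (b : Module.Basis (Fin p × Fin p) k A) (hx : x ^ p = 0) (hy : y ^ p = 0) (hyx : y * x = q • (x * y))
    (hb : ∀ ij : Fin p × Fin p, b ij = x ^ (ij.1 : ℕ) * y ^ (ij.2 : ℕ))
    {z : A} (hz : z ∈ qciD b 1) : ∀ n, z ^ (n + 1) ∈ qciD b (n + 1) := by
  intro n
  induction n with
  | zero => simpa using hz
  | succ m ih =>
    rw [pow_succ']
    exact qciD_mul b hx hy hyx hb hz ih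

lemma qci_nilpotent (b : Module.Basis (Fin p × Fin p) k A) (hx : x ^ p = 0) (hy : y ^ p = 0) (hyx : y * x = q • (x * y))
    (hb : ∀ ij : Fin p × Fin p, b ij = x ^ (ij.1 : ℕ) * y ^ (ij.2 : ℕ))
    {z : A} (hz : z ∈ qciD b 1) : IsNilpotent z := by
  refine ⟨2 * p + 1, ?_⟩
  have h1 : z ^ (2 * p + 1) ∈ qciD b (2 * p + 1) := qciD_pow b hx hy hyx hb hz _
  have hemp : {ij : Fin p × Fin p | 2 * p + 1 ≤ (ij.1 : ℕ) + (ij.2 : ℕ)} = ∅ := by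
    ext ⟨u, v⟩
    simp only [Set.mem_setOf_eq, Set.mem_empty_iff_false, iff_false, not_le]
    have := u.isLt
    have := v.isLt
    omega
  rwa [qciD, hemp, Set.image_empty, Submodule.span_empty, Submodule.mem_bot] at h1

lemma qci_jacobson_eq (hp : 2 ≤ p) (b : Module.Basis (Fin p × Fin p) k A) (hx : x ^ p = 0) (hy : y ^ p = 0) (hyx : y * x = q • (x * y))
    (hb : ∀ ij : Fin p × Fin p, b ij = x ^ (ij.1 : ℕ) * y ^ (ij.2 : ℕ)) :
    Ideal.jacobson (⊥ : Ideal A) = qciNI q hp hx hy hyx b hb := by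
  have hrepr1 : b.repr 1 (⟨0, by omega⟩, ⟨0, by omega⟩) = 1 := by
    have h1 : (1 : A) = x ^ 0 * y ^ 0 := by simp
    rw [h1, qci_repr_mono b hb (by omega) (by omega), if_pos rfl]
  apply le_antisymm
  · -- jacobson ⊥ ≤ NI, since NI is maximal
    have hmax : (qciNI q hp hx hy hyx b hb).IsMaximal := by
      rw [Ideal.isMaximal_iff]
      constructor
      · intro h1
        have h1' : b.repr 1 (⟨0, by omega⟩, ⟨0, by omega⟩) = 0 := h1
        rw [hrepr1] at h1'
        exact one_ne_zero h1'
      · intro J w hIJ hwNI hwJ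
        set c : k := b.repr w (⟨0, by omega⟩, ⟨0, by omega⟩) with hc
        have hc0 : c ≠ 0 := hwNI
        have hmem : w - c • 1 ∈ qciNI q hp hx hy hyx b hb := by
          show b.repr (w - c • 1) _ = 0
          rw [map_sub, map_smul, Finsupp.sub_apply, Finsupp.smul_apply, hrepr1,
            smul_eq_mul, mul_one, ← hc, sub_self]
        have h1 : (1 : A) = c⁻¹ • w - c⁻¹ • (w - c • 1) := by
          rw [smul_sub, sub_sub_cancel, smul_smul, inv_mul_cancel₀ hc0, one_smul]
        rw [h1]
        apply Submodule.sub_mem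
        · rw [Algebra.smul_def]
          exact Ideal.mul_mem_left J _ hwJ
        · rw [Algebra.smul_def]
          exact Ideal.mul_mem_left J _ (hIJ hmem)
    exact sInf_le ⟨bot_le, hmax⟩
  · -- NI ≤ jacobson ⊥
    intro z hz
    rw [Ideal.jacobson, Ideal.mem_sInf]
    rintro M ⟨-, hM⟩
    by_contra hzM
    have hlt : M < M ⊔ Ideal.span {z} := by
      refine lt_of_le_of_ne le_sup_left fun hEq => hzM ?_
      have : z ∈ M ⊔ Ideal.span {z} :=
        Submodule.mem_sup_right (Ideal.subset_span (Set.mem_singleton z))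
      rwa [← hEq] at this
    have htop : M ⊔ Ideal.span {z} = ⊤ := hM.out.2 _ hlt
    have h1 : (1 : A) ∈ M ⊔ Ideal.span {z} := htop ▸ Submodule.mem_top
    obtain ⟨m, hm, r, hr, hmr⟩ := Submodule.mem_sup.mp h1
    rw [Ideal.span, Submodule.mem_span_singleton] at hr
    obtain ⟨a, rfl⟩ := hr
    have haz : a • z ∈ qciNI q hp hx hy hyx b hb := by
      exact qci_repr00_mul_left hp hx hy hyx b hb hz a
    have hnil : IsNilpotent (a • z) :=
      qci_nilpotent b hx hy hyx hb (qciNI_le_D1 hp hx hy hyx b hb haz)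
    have hm1 : m = 1 - a • z := by rw [← hmr, add_sub_cancel_right]
    have : IsUnit m := hm1 ▸ hnil.isUnit_one_sub
    exact hM.ne_top (M.eq_top_of_isUnit_mem hm this)


lemma qci_adjoin_top (b : Module.Basis (Fin p × Fin p) k A)
    (hb : ∀ ij : Fin p × Fin p, b ij = x ^ (ij.1 : ℕ) * y ^ (ij.2 : ℕ)) :
    Algebra.adjoin k {x, y} = ⊤ := by
  rw [eq_top_iff]
  intro a _
  have h1 : a ∈ Submodule.span k (Set.range ⇑b) := by rw [b.span_eq]; trivial
  have h2 : Submodule.span k (Set.range ⇑b) ≤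
      Subalgebra.toSubmodule (Algebra.adjoin k {x, y}) := by
    rw [Submodule.span_le]
    rintro - ⟨ij, rfl⟩
    show b ij ∈ Algebra.adjoin k {x, y}
    rw [hb]
    exact mul_mem (pow_mem (Algebra.subset_adjoin (by simp)) _)
      (pow_mem (Algebra.subset_adjoin (by simp)) _)
  exact h2 h1

lemma qci_mem_center_of_commutes (b : Module.Basis (Fin p × Fin p) k A)
    (hb : ∀ ij : Fin p × Fin p, b ij = x ^ (ij.1 : ℕ) * y ^ (ij.2 : ℕ))
    {z : A} (hzx : x * z = z * x) (hzy : y * z = z * y) :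
    z ∈ Subalgebra.center k A := by
  rw [Subalgebra.mem_center_iff]
  intro g
  have hle : Algebra.adjoin k ({x, y} : Set A) ≤ Subalgebra.centralizer k {z} := by
    apply Algebra.adjoin_le
    rintro g (rfl | rfl)
    · exact (Subalgebra.mem_centralizer_iff k).mpr fun m hm => by
        rw [Set.mem_singleton_iff] at hm; rw [hm]; exact hzx.symm
    · exact (Subalgebra.mem_centralizer_iff k).mpr fun m hm => by
        rw [Set.mem_singleton_iff] at hm; rw [hm]; exact hzy.symm
  have hg : g ∈ Subalgebra.centralizer k ({z} : Set A) := by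
    rw [qci_adjoin_top b hb] at hle
    exact hle trivial
  exact ((Subalgebra.mem_centralizer_iff k).mp hg z rfl).symm

lemma qci_mono_central (hx : x ^ p = 0) (hy : y ^ p = 0) (hyx : y * x = q • (x * y))
    (hq : orderOf q = e) (hediv : e ∣ p - 1)
    (b : Module.Basis (Fin p × Fin p) k A)
    (hb : ∀ ij : Fin p × Fin p, b ij = x ^ (ij.1 : ℕ) * y ^ (ij.2 : ℕ))
    {i j : ℕ} (hi : i < p) (hj : j < p)
    (hC : (e ∣ i ∧ e ∣ j) ∨ i = p - 1 ∨ j = p - 1) :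
    x ^ i * y ^ j ∈ Subalgebra.center k A := by
  have hq1 : ∀ n : ℕ, e ∣ n → q ^ n = 1 := fun n hn => by
    rw [← hq] at hn; exact orderOf_dvd_iff_pow_eq_one.mp hn
  apply qci_mem_center_of_commutes b hb
  · -- x * z = z * x
    have h1 : x * (x ^ i * y ^ j) = (x ^ 1 * y ^ 0) * (x ^ i * y ^ j) := by simp
    have h2 : (x ^ i * y ^ j) * x = (x ^ i * y ^ j) * (x ^ 1 * y ^ 0) := by simp
    rw [h1, h2, qci_mul_mono hyx, qci_mul_mono hyx]
    by_cases hip : i = p - 1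
    · rw [qci_mono_zero hx hy (Or.inl (by omega)),
        qci_mono_zero hx hy (Or.inl (by omega)), smul_zero, smul_zero]
    · have hej : e ∣ j := by
        rcases hC with ⟨-, h⟩ | h | h
        · exact h
        · exact absurd h hip
        · rw [h]; exact hediv
      rw [hq1 (1 * j) (by simpa using hej), hq1 (i * 0) (by simp), one_smul, one_smul,
        show 1 + i = i + 1 by omega, show 0 + j = j + 0 by omega]
  · -- y * z = z * y
    have h1 : y * (x ^ i * y ^ j) = (x ^ 0 * y ^ 1) * (x ^ i * y ^ j) := by simp
    have h2 : (x ^ i * y ^ j) * y = (x ^ i * y ^ j) * (x ^ 0 * y ^ 1) := by simp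
    rw [h1, h2, qci_mul_mono hyx, qci_mul_mono hyx]
    by_cases hjp : j = p - 1
    · rw [qci_mono_zero hx hy (Or.inr (by omega)),
        qci_mono_zero hx hy (Or.inr (by omega)), smul_zero, smul_zero]
    · have hei : e ∣ i := by
        rcases hC with ⟨h, -⟩ | h | h
        · exact h
        · rw [h]; exact hediv
        · exact absurd h hjp
      rw [hq1 (i * 1) (by simpa using hei), hq1 (0 * j) (by simp), one_smul, one_smul,
        show 0 + i = i + 0 by omega, show 1 + j = j + 1 by omega]

lemma qci_center_coords (hp : 2 ≤ p) (hx : x ^ p = 0) (hy : y ^ p = 0)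
    (hyx : y * x = q • (x * y)) (hq : orderOf q = e) (hediv : e ∣ p - 1)
    (b : Module.Basis (Fin p × Fin p) k A)
    (hb : ∀ ij : Fin p × Fin p, b ij = x ^ (ij.1 : ℕ) * y ^ (ij.2 : ℕ))
    {z : A} (hz : z ∈ Subalgebra.center k A) (u v : Fin p)
    (hnC : ¬((e ∣ (u : ℕ) ∧ e ∣ (v : ℕ)) ∨ (u : ℕ) = p - 1 ∨ (v : ℕ) = p - 1)) :
    b.repr z (u, v) = 0 := by
  push_neg at hnC
  obtain ⟨hnuv, hup, hvp⟩ := hnC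
  have hq1 : ∀ n : ℕ, ¬ e ∣ n → q ^ n ≠ 1 := fun n hn h1 => by
    rw [← hq] at hn; exact hn (orderOf_dvd_iff_pow_eq_one.mpr h1)
  have hcomm := Subalgebra.mem_center_iff.mp hz
  by_cases hej : e ∣ (v : ℕ)
  · -- then ¬ e ∣ u ; use commutation with y
    have heu : ¬ e ∣ (u : ℕ) := fun h => hnuv h hej
    have hvlt : (v : ℕ) + 1 < p := by have := v.isLt; omega
    have hult : (u : ℕ) + 0 < p := by have := u.isLt; omega
    have hR := qci_repr_mul_right hx hy hyx b hb z 0 1 u v hult hvlt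
    have hL := qci_repr_mul_left hx hy hyx b hb z 0 1 u v (by omega) (by omega)
    rw [show x ^ 0 * y ^ 1 = y by simp] at hR hL
    rw [hcomm y] at hL
    have hpt : ((⟨0 + (u : ℕ), by omega⟩ : Fin p), (⟨1 + (v : ℕ), by omega⟩ : Fin p)) =
        ((⟨(u : ℕ) + 0, hult⟩ : Fin p), (⟨(v : ℕ) + 1, hvlt⟩ : Fin p)) := by
      ext <;> simp <;> omega
    rw [hpt] at hL
    have hpt2 : ((⟨(u : ℕ), by omega⟩ : Fin p), (⟨(v : ℕ), by omega⟩ : Fin p)) = (u, v) := by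
      ext <;> simp
    rw [hpt2] at hR hL
    have heq : q ^ ((u : ℕ) * 1) * b.repr z (u, v) = q ^ (0 * (v : ℕ)) * b.repr z (u, v) :=
      hL.symm.trans hR
    rw [zero_mul, pow_zero, one_mul, mul_one] at heq
    by_contra hc
    have heq' : q ^ ((u : ℕ)) * b.repr z (u, v) = 1 * b.repr z (u, v) := by
      rw [one_mul]; simpa using heq
    exact hq1 _ heu (mul_right_cancel₀ hc heq')
  · -- ¬ e ∣ v ; use commutation with x
    have hult : (u : ℕ) + 1 < p := by have := u.isLt; omega
    have hvlt : (v : ℕ) + 0 < p := by have := v.isLt; omega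
    have hR := qci_repr_mul_right hx hy hyx b hb z 1 0 u v hult hvlt
    have hL := qci_repr_mul_left hx hy hyx b hb z 1 0 u v (by omega) (by omega)
    rw [show x ^ 1 * y ^ 0 = x by simp] at hR hL
    rw [hcomm x] at hL
    have hpt : ((⟨1 + (u : ℕ), by omega⟩ : Fin p), (⟨0 + (v : ℕ), by omega⟩ : Fin p)) =
        ((⟨(u : ℕ) + 1, hult⟩ : Fin p), (⟨(v : ℕ) + 0, hvlt⟩ : Fin p)) := by
      ext <;> simp <;> omega
    rw [hpt] at hL
    have hpt2 : ((⟨(u : ℕ), by omega⟩ : Fin p), (⟨(v : ℕ), by omega⟩ : Fin p)) = (u, v) := by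
      ext <;> simp
    rw [hpt2] at hR hL
    have heq : q ^ ((u : ℕ) * 0) * b.repr z (u, v) = q ^ (1 * (v : ℕ)) * b.repr z (u, v) :=
      hL.symm.trans hR
    rw [mul_zero, pow_zero, one_mul, one_mul] at heq
    by_contra hc
    have heq' : q ^ ((v : ℕ)) * b.repr z (u, v) = 1 * b.repr z (u, v) := by
      rw [one_mul]; simpa using heq.symm
    exact hq1 _ hej (mul_right_cancel₀ hc heq')


lemma qci_Q_card (hp2 : 2 ≤ p) (he1 : 1 ≤ e) (hediv : e ∣ p - 1) :
    (Finset.univ.filter fun i : Fin p => e ∣ (i : ℕ) ∧ (i : ℕ) ≠ p - 1).card = (p - 1) / e := by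
  set m := (p - 1) / e with hm
  have hem : e * m = p - 1 := Nat.mul_div_cancel' hediv
  have hep : e ≤ p - 1 := Nat.le_of_dvd (by omega) hediv
  have hbound : ∀ t : Fin m, e * (t : ℕ) < p := by
    intro t
    have h1 : e * ((t : ℕ) + 1) ≤ e * m := Nat.mul_le_mul_left _ t.isLt
    have h2 : e * ((t : ℕ) + 1) = e * (t : ℕ) + e := by ring
    omega
  have himg : (Finset.univ.filter fun i : Fin p => e ∣ (i : ℕ) ∧ (i : ℕ) ≠ p - 1) =
      Finset.univ.image (fun t : Fin m => (⟨e * (t : ℕ), hbound t⟩ : Fin p)) := by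
    ext i
    simp only [Finset.mem_filter, Finset.mem_univ, true_and, Finset.mem_image]
    constructor
    · rintro ⟨⟨s, hs⟩, hne⟩
      have hilt := i.isLt
      have h3 : s ≤ m := Nat.le_of_mul_le_mul_left (show e * s ≤ e * m by omega) (by omega)
      have hslt : s < m := by
        rcases Nat.lt_or_ge s m with h | h
        · exact h
        · have hsm : s = m := le_antisymm h3 h
          exact absurd (by rw [hs, hsm, hem]) hne
      exact ⟨⟨s, hslt⟩, by ext; simp [hs]⟩
    · rintro ⟨t, rfl⟩
      constructor
      · exact Dvd.intro _ rfl
      · have h1 : e * ((t : ℕ) + 1) ≤ e * m := Nat.mul_le_mul_left _ t.isLt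
        have h2 : e * ((t : ℕ) + 1) = e * (t : ℕ) + e := by ring
        simp only []
        omega
  rw [himg, Finset.card_image_of_injective _ (fun t1 t2 h => by
    have : e * (t1 : ℕ) = e * (t2 : ℕ) := congrArg Fin.val h
    exact Fin.ext (Nat.eq_of_mul_eq_mul_left (by omega) this)), Finset.card_univ,
    Fintype.card_fin]

lemma qci_card_center (hp2 : 2 ≤ p) (he1 : 1 ≤ e) (hediv : e ∣ p - 1) :
    (Finset.univ.filter fun ij : Fin p × Fin p =>
      (e ∣ (ij.1 : ℕ) ∧ e ∣ (ij.2 : ℕ)) ∨ (ij.1 : ℕ) = p - 1 ∨ (ij.2 : ℕ) = p - 1).card =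
      ((p - 1) / e) ^ 2 + 2 * p - 1 := by
  classical
  set m := (p - 1) / e with hm
  set lastp : Fin p := ⟨p - 1, by omega⟩ with hlastp
  set Q : Finset (Fin p) := Finset.univ.filter
    (fun i : Fin p => e ∣ (i : ℕ) ∧ (i : ℕ) ≠ p - 1) with hQ
  set P1 : Finset (Fin p × Fin p) := Finset.univ.filter
    (fun ij => (ij.2 : ℕ) = p - 1) with hP1
  set P2 : Finset (Fin p × Fin p) := Finset.univ.filter
    (fun ij => (ij.1 : ℕ) = p - 1 ∧ (ij.2 : ℕ) ≠ p - 1) with hP2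
  set P3 : Finset (Fin p × Fin p) := Q ×ˢ Q with hP3
  have hsplit : (Finset.univ.filter fun ij : Fin p × Fin p =>
      (e ∣ (ij.1 : ℕ) ∧ e ∣ (ij.2 : ℕ)) ∨ (ij.1 : ℕ) = p - 1 ∨ (ij.2 : ℕ) = p - 1) =
      P1 ∪ P2 ∪ P3 := by
    ext ⟨a, c⟩
    simp only [hP1, hP2, hP3, hQ, Finset.mem_filter, Finset.mem_union, Finset.mem_univ,
      true_and, Finset.mem_product]
    tauto
  have hcard1 : P1.card = p := by
    have : P1 = Finset.univ.image (fun i : Fin p => (i, lastp)) := by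
      ext ⟨a, c⟩
      simp only [hP1, Finset.mem_filter, Finset.mem_univ, true_and, Finset.mem_image,
        Prod.mk.injEq, hlastp]
      constructor
      · intro h
        exact ⟨a, rfl, by ext; simpa using h.symm⟩
      · rintro ⟨i, rfl, rfl⟩
        rfl
    rw [this, Finset.card_image_of_injective _ (fun a1 a2 h => (Prod.mk.injEq _ _ _ _).mp h |>.1),
      Finset.card_univ, Fintype.card_fin]
  have hcard2 : P2.card = p - 1 := by
    have herase : Finset.univ.filter (fun i : Fin p => (i : ℕ) ≠ p - 1) =
        Finset.univ.erase lastp := by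
      ext i
      simp [hlastp, Fin.ext_iff]
    have : P2 = (Finset.univ.filter (fun i : Fin p => (i : ℕ) ≠ p - 1)).image
        (fun i : Fin p => (lastp, i)) := by
      ext ⟨a, c⟩
      simp only [hP2, Finset.mem_filter, Finset.mem_univ, true_and, Finset.mem_image,
        Prod.mk.injEq, hlastp]
      constructor
      · rintro ⟨h1, h2⟩
        exact ⟨c, h2, by ext; simpa using h1.symm, rfl⟩
      · rintro ⟨i, hi, rfl, rfl⟩
        exact ⟨rfl, hi⟩
    rw [this, Finset.card_image_of_injective _
      (fun a1 a2 h => (Prod.mk.injEq _ _ _ _).mp h |>.2), herase,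
      Finset.card_erase_of_mem (Finset.mem_univ _), Finset.card_univ, Fintype.card_fin]
  have hcard3 : P3.card = m * m := by
    rw [hP3, Finset.card_product, qci_Q_card hp2 he1 hediv]
  have hd12 : Disjoint P1 P2 := by
    rw [Finset.disjoint_left]
    rintro ⟨a, c⟩ h1 h2
    simp only [hP1, hP2, Finset.mem_filter] at h1 h2
    exact h2.2.2 h1.2
  have hd123 : Disjoint (P1 ∪ P2) P3 := by
    rw [Finset.disjoint_left]
    rintro ⟨a, c⟩ h1 h2
    simp only [hP1, hP2, hP3, hQ, Finset.mem_filter, Finset.mem_union,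
      Finset.mem_product] at h1 h2
    rcases h1 with h | h
    · exact h2.2.2.2 h.2
    · exact h2.1.2.2 h.2.1
  rw [hsplit, Finset.card_union_of_disjoint hd123, Finset.card_union_of_disjoint hd12,
    hcard1, hcard2, hcard3]
  have : m * m = m ^ 2 := by ring
  omega

lemma qci_R_card (hp2 : 2 ≤ p) (he1 : 1 ≤ e) (hep : e ≤ p - 1) :
    (Finset.univ.filter fun i : Fin p => p - e ≤ (i : ℕ)).card = e := by
  have himg : (Finset.univ.filter fun i : Fin p => p - e ≤ (i : ℕ)) =
      Finset.univ.image (fun t : Fin e => (⟨p - e + (t : ℕ), by have := t.isLt; omega⟩ : Fin p)) := by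
    ext i
    simp only [Finset.mem_filter, Finset.mem_univ, true_and, Finset.mem_image]
    constructor
    · intro h
      have hlt := i.isLt
      refine ⟨⟨(i : ℕ) - (p - e), by omega⟩, ?_⟩
      ext
      simp
      omega
    · rintro ⟨t, rfl⟩
      simp
  rw [himg, Finset.card_image_of_injective _ (fun t1 t2 h => by
    have := congrArg Fin.val h
    simp at this
    exact Fin.ext this), Finset.card_univ, Fintype.card_fin]

lemma qci_card_soc (hp2 : 2 ≤ p) (he1 : 1 ≤ e) (hep : e ≤ p - 1) :
    (Finset.univ.filter fun ij : Fin p × Fin p =>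
      (p - e ≤ (ij.1 : ℕ) ∧ (ij.2 : ℕ) = p - 1) ∨ ((ij.1 : ℕ) = p - 1 ∧ p - e ≤ (ij.2 : ℕ))).card =
      2 * e - 1 := by
  classical
  set lastp : Fin p := ⟨p - 1, by omega⟩ with hlastp
  set R : Finset (Fin p) := Finset.univ.filter (fun i : Fin p => p - e ≤ (i : ℕ)) with hR
  set U1 : Finset (Fin p × Fin p) := R ×ˢ {lastp} with hU1
  set U2 : Finset (Fin p × Fin p) := {lastp} ×ˢ R with hU2
  have hlp : ∀ i : Fin p, ((i : ℕ) = p - 1) ↔ i = lastp := fun i => by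
    rw [Fin.ext_iff]
  have hsplit : (Finset.univ.filter fun ij : Fin p × Fin p =>
      (p - e ≤ (ij.1 : ℕ) ∧ (ij.2 : ℕ) = p - 1) ∨
        ((ij.1 : ℕ) = p - 1 ∧ p - e ≤ (ij.2 : ℕ))) = U1 ∪ U2 := by
    ext ⟨a, c⟩
    simp only [hU1, hU2, hR, Finset.mem_filter, Finset.mem_union, Finset.mem_univ, true_and,
      Finset.mem_product, Finset.mem_singleton, hlp]
  have hcardR : R.card = e := qci_R_card hp2 he1 hep
  have hcard1 : U1.card = e := by
    rw [hU1, Finset.card_product, Finset.card_singleton, hcardR, mul_one]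
  have hcard2 : U2.card = e := by
    rw [hU2, Finset.card_product, Finset.card_singleton, hcardR, one_mul]
  have hlastR : lastp ∈ R := by
    rw [hR, Finset.mem_filter]
    exact ⟨Finset.mem_univ _, by simp [hlastp]; omega⟩
  have hinter : U1 ∩ U2 = {(lastp, lastp)} := by
    ext ⟨a, c⟩
    simp only [hU1, hU2, Finset.mem_inter, Finset.mem_product, Finset.mem_singleton,
      Prod.mk.injEq]
    constructor
    · rintro ⟨⟨-, h2⟩, h3, -⟩
      exact ⟨h3, h2⟩
    · rintro ⟨rfl, rfl⟩
      exact ⟨⟨hlastR, rfl⟩, rfl, hlastR⟩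
  have hui := Finset.card_union_add_card_inter U1 U2
  rw [hinter, hcard1, hcard2, Finset.card_singleton] at hui
  rw [hsplit]
  omega



lemma qci_soc_mono1 (hp2 : 2 ≤ p) (hx : x ^ p = 0) (hy : y ^ p = 0)
    (hyx : y * x = q • (x * y)) (hq : orderOf q = e) (he1 : 1 ≤ e) (hediv : e ∣ p - 1)
    (b : Module.Basis (Fin p × Fin p) k A)
    (hb : ∀ ij : Fin p × Fin p, b ij = x ^ (ij.1 : ℕ) * y ^ (ij.2 : ℕ))
    {i : ℕ} (hie : p - e ≤ i) (hip : i ≤ p - 1) :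
    x ^ i * y ^ (p - 1) ∈ socCenter k A := by
  have hep : e ≤ p - 1 := Nat.le_of_dvd (by omega) hediv
  refine ⟨qci_mono_central hx hy hyx hq hediv b hb (by omega) (by omega)
    (Or.inr (Or.inr rfl)), ?_⟩
  intro m hmZ hmJ
  rw [qci_jacobson_eq hp2 b hx hy hyx hb] at hmJ
  have hm00 : b.repr m (⟨0, by omega⟩, ⟨0, by omega⟩) = 0 := hmJ
  conv_lhs => rw [show m = ∑ uv : Fin p × Fin p, b.repr m uv • b uv from (b.sum_repr m).symm]
  rw [Finset.mul_sum]
  apply Finset.sum_eq_zero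
  rintro ⟨u, v⟩ -
  rw [mul_smul_comm]
  by_cases hc : b.repr m (u, v) = 0
  · rw [hc, zero_smul]
  · have hCuv : (e ∣ (u : ℕ) ∧ e ∣ (v : ℕ)) ∨ (u : ℕ) = p - 1 ∨ (v : ℕ) = p - 1 := by
      by_contra h
      exact hc (qci_center_coords hp2 hx hy hyx hq hediv b hb hmZ u v h)
    have huv0 : ¬((u : ℕ) = 0 ∧ (v : ℕ) = 0) := by
      rintro ⟨h1, h2⟩
      exact hc (by rw [show ((u, v) : Fin p × Fin p) = (⟨0, by omega⟩, ⟨0, by omega⟩)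
        from by ext <;> simpa] ; exact hm00)
    rw [hb, qci_mul_mono hyx]
    dsimp only
    rw [qci_mono_zero hx hy ?_, smul_zero, smul_zero]
    by_cases hv1 : 1 ≤ (v : ℕ)
    · right; omega
    · left
      have hu1 : 1 ≤ (u : ℕ) := by omega
      have heu : e ≤ (u : ℕ) := by
        rcases hCuv with ⟨h1, -⟩ | h | h
        · exact Nat.le_of_dvd (by omega) h1
        · omega
        · omega
      omega

lemma qci_soc_mono2 (hp2 : 2 ≤ p) (hx : x ^ p = 0) (hy : y ^ p = 0)
    (hyx : y * x = q • (x * y)) (hq : orderOf q = e) (he1 : 1 ≤ e) (hediv : e ∣ p - 1)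
    (b : Module.Basis (Fin p × Fin p) k A)
    (hb : ∀ ij : Fin p × Fin p, b ij = x ^ (ij.1 : ℕ) * y ^ (ij.2 : ℕ))
    {i : ℕ} (hie : p - e ≤ i) (hip : i ≤ p - 1) :
    x ^ (p - 1) * y ^ i ∈ socCenter k A := by
  have hep : e ≤ p - 1 := Nat.le_of_dvd (by omega) hediv
  refine ⟨qci_mono_central hx hy hyx hq hediv b hb (by omega) (by omega)
    (Or.inr (Or.inl rfl)), ?_⟩
  intro m hmZ hmJ
  rw [qci_jacobson_eq hp2 b hx hy hyx hb] at hmJ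
  have hm00 : b.repr m (⟨0, by omega⟩, ⟨0, by omega⟩) = 0 := hmJ
  conv_lhs => rw [show m = ∑ uv : Fin p × Fin p, b.repr m uv • b uv from (b.sum_repr m).symm]
  rw [Finset.mul_sum]
  apply Finset.sum_eq_zero
  rintro ⟨u, v⟩ -
  rw [mul_smul_comm]
  by_cases hc : b.repr m (u, v) = 0
  · rw [hc, zero_smul]
  · have hCuv : (e ∣ (u : ℕ) ∧ e ∣ (v : ℕ)) ∨ (u : ℕ) = p - 1 ∨ (v : ℕ) = p - 1 := by
      by_contra h
      exact hc (qci_center_coords hp2 hx hy hyx hq hediv b hb hmZ u v h)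
    have huv0 : ¬((u : ℕ) = 0 ∧ (v : ℕ) = 0) := by
      rintro ⟨h1, h2⟩
      exact hc (by rw [show ((u, v) : Fin p × Fin p) = (⟨0, by omega⟩, ⟨0, by omega⟩)
        from by ext <;> simpa] ; exact hm00)
    rw [hb, qci_mul_mono hyx]
    dsimp only
    rw [qci_mono_zero hx hy ?_, smul_zero, smul_zero]
    by_cases hu1 : 1 ≤ (u : ℕ)
    · left; omega
    · right
      have hv1 : 1 ≤ (v : ℕ) := by omega
      have hev : e ≤ (v : ℕ) := by
        rcases hCuv with ⟨-, h1⟩ | h | h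
        · exact Nat.le_of_dvd (by omega) h1
        · omega
        · omega
      omega

lemma qci_soc_coords (hp2 : 2 ≤ p) (hx : x ^ p = 0) (hy : y ^ p = 0)
    (hyx : y * x = q • (x * y)) (hq : orderOf q = e) (he1 : 1 ≤ e) (hediv : e ∣ p - 1)
    (b : Module.Basis (Fin p × Fin p) k A)
    (hb : ∀ ij : Fin p × Fin p, b ij = x ^ (ij.1 : ℕ) * y ^ (ij.2 : ℕ))
    {z : A} (hz : z ∈ socCenter k A) (u v : Fin p)
    (hn : ¬((p - e ≤ (u : ℕ) ∧ (v : ℕ) = p - 1) ∨ ((u : ℕ) = p - 1 ∧ p - e ≤ (v : ℕ)))) :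
    b.repr z (u, v) = 0 := by
  have hep : e ≤ p - 1 := Nat.le_of_dvd (by omega) hediv
  obtain ⟨hzZ, hzann⟩ := hz
  have hqe1 : ∀ n : ℕ, q ^ (e * n) = 1 := fun n => by
    rw [pow_mul, ← hq, pow_orderOf_eq_one, one_pow]
  have hpt2 : ((⟨(u : ℕ), u.isLt⟩ : Fin p), (⟨(v : ℕ), v.isLt⟩ : Fin p)) = (u, v) := by
    ext <;> simp
  by_cases hue : (u : ℕ) + e < p
  · -- multiply by x^e
    have hcen : x ^ e * y ^ 0 ∈ Subalgebra.center k A :=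
      qci_mono_central hx hy hyx hq hediv b hb (by omega) (by omega)
        (Or.inl ⟨dvd_rfl, dvd_zero e⟩)
    have hJ : x ^ e * y ^ 0 ∈ Ideal.jacobson (⊥ : Ideal A) := by
      rw [qci_jacobson_eq hp2 b hx hy hyx hb]
      exact qci_repr00_mono hp2 hx hy b hb (by omega)
    have h0 : z * (x ^ e * y ^ 0) = 0 := hzann _ hcen hJ
    have hrr := qci_repr_mul_right hx hy hyx b hb z e 0 (u : ℕ) (v : ℕ) hue
      (by have := v.isLt; omega)
    rw [h0, map_zero, Finsupp.coe_zero, Pi.zero_apply, hqe1, one_mul] at hrr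
    rw [show ((⟨(u : ℕ), by omega⟩ : Fin p), (⟨(v : ℕ), by omega⟩ : Fin p)) = (u, v)
      from by ext <;> simp] at hrr
    exact hrr.symm
  by_cases hve : (v : ℕ) + e < p
  · -- multiply by y^e
    have hcen : x ^ 0 * y ^ e ∈ Subalgebra.center k A :=
      qci_mono_central hx hy hyx hq hediv b hb (by omega) (by omega)
        (Or.inl ⟨dvd_zero e, dvd_rfl⟩)
    have hJ : x ^ 0 * y ^ e ∈ Ideal.jacobson (⊥ : Ideal A) := by
      rw [qci_jacobson_eq hp2 b hx hy hyx hb]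
      exact qci_repr00_mono hp2 hx hy b hb (by omega)
    have h0 : z * (x ^ 0 * y ^ e) = 0 := hzann _ hcen hJ
    have hrr := qci_repr_mul_right hx hy hyx b hb z 0 e (u : ℕ) (v : ℕ)
      (by have := u.isLt; omega) hve
    rw [h0, map_zero, Finsupp.coe_zero, Pi.zero_apply, zero_mul, pow_zero, one_mul] at hrr
    rw [show ((⟨(u : ℕ), by omega⟩ : Fin p), (⟨(v : ℕ), by omega⟩ : Fin p)) = (u, v)
      from by ext <;> simp] at hrr
    exact hrr.symm
  · -- both coordinates are at least p - e
    have hup : p - e ≤ (u : ℕ) := by omega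
    have hvp : p - e ≤ (v : ℕ) := by omega
    by_contra hc
    have hCuv : (e ∣ (u : ℕ) ∧ e ∣ (v : ℕ)) ∨ (u : ℕ) = p - 1 ∨ (v : ℕ) = p - 1 := by
      by_contra h
      exact hc (qci_center_coords hp2 hx hy hyx hq hediv b hb hzZ u v h)
    apply hn
    rcases hCuv with ⟨h1, h2⟩ | h | h
    · -- multiples of e in [p - e, p - 1] : only p - 1
      have hu : (u : ℕ) = p - 1 := by
        obtain ⟨a, ha⟩ := Nat.dvd_sub hediv h1
        have hulast := u.isLt
        rcases Nat.eq_zero_or_pos a with rfl | hapos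
        · omega
        · have : e ≤ e * a := Nat.le_mul_of_pos_right e hapos
          omega
      exact Or.inr ⟨hu, hvp⟩
    · exact Or.inr ⟨h, hvp⟩
    · exact Or.inl ⟨hup, h⟩


lemma qci_mono_mem_Jpow (hp2 : 2 ≤ p) (hx : x ^ p = 0) (hy : y ^ p = 0)
    (hyx : y * x = q • (x * y)) (b : Module.Basis (Fin p × Fin p) k A)
    (hb : ∀ ij : Fin p × Fin p, b ij = x ^ (ij.1 : ℕ) * y ^ (ij.2 : ℕ)) (n : ℕ) :
    ∀ i j : ℕ, n + 1 ≤ i + j →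
      x ^ i * y ^ j ∈
        ((Submodule.restrictScalars k (Ideal.jacobson (⊥ : Ideal A))) ^ (n + 1) :
          Submodule k A) := by
  induction n with
  | zero =>
    intro i j hsum
    rw [pow_one]
    show x ^ i * y ^ j ∈ Ideal.jacobson (⊥ : Ideal A)
    rw [qci_jacobson_eq hp2 b hx hy hyx hb]
    exact qci_repr00_mono hp2 hx hy b hb (by omega)
  | succ m ih =>
    intro i j hsum
    by_cases hi1 : 1 ≤ i
    · have hxJ : x ∈ Submodule.restrictScalars k (Ideal.jacobson (⊥ : Ideal A)) := by
        show x ∈ Ideal.jacobson (⊥ : Ideal A)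
        rw [qci_jacobson_eq hp2 b hx hy hyx hb]
        show b.repr x (⟨0, by omega⟩, ⟨0, by omega⟩) = 0
        rw [show (x : A) = x ^ 1 * y ^ 0 by simp]
        exact qci_repr00_mono hp2 hx hy b hb (by omega)
      have hr : x ^ i * y ^ j = x * (x ^ (i - 1) * y ^ j) := by
        rw [← mul_assoc]
        congr 1
        rw [← pow_succ']
        congr 1
        omega
      rw [hr, pow_succ']
      exact Submodule.mul_mem_mul hxJ (ih (i - 1) j (by omega))
    · have hyJ : y ∈ Submodule.restrictScalars k (Ideal.jacobson (⊥ : Ideal A)) := by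
        show y ∈ Ideal.jacobson (⊥ : Ideal A)
        rw [qci_jacobson_eq hp2 b hx hy hyx hb]
        show b.repr y (⟨0, by omega⟩, ⟨0, by omega⟩) = 0
        rw [show (y : A) = x ^ 0 * y ^ 1 by simp]
        exact qci_repr00_mono hp2 hx hy b hb (by omega)
      have hr : x ^ i * y ^ j = (x ^ i * y ^ (j - 1)) * y := by
        rw [mul_assoc]
        congr 1
        rw [← pow_succ]
        congr 1
        omega
      rw [hr, pow_succ]
      exact Submodule.mul_mem_mul (ih i (j - 1) (by omega)) hyJ

end QCI

theorem center_of_quantum_complete_intersection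
    (k : Type*) [Field k] (p e : ℕ) (q : k)
    (hp : p.Prime) (hodd : Odd p) (hchar : CharP k p)
    (hq : orderOf q = e) (he : 2 ≤ e) (hediv : e ∣ p - 1)
    (A : Type*) [Ring A] [Algebra k A] (x y : A)
    (hx : x ^ p = 0) (hy : y ^ p = 0) (hyx : y * x = q • (x * y))
    (b : Module.Basis (Fin p × Fin p) k A)
    (hb : ∀ ij : Fin p × Fin p, b ij = x ^ (ij.1 : ℕ) * y ^ (ij.2 : ℕ)) :
    (LinearIndependent k (fun a : ↥{a : A | ∃ i j : ℕ, i < p ∧ j < p ∧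
        ((e ∣ i ∧ e ∣ j) ∨ i = p - 1 ∨ j = p - 1) ∧ a = x ^ i * y ^ j} => (a : A)) ∧
      Submodule.span k {a : A | ∃ i j : ℕ, i < p ∧ j < p ∧
        ((e ∣ i ∧ e ∣ j) ∨ i = p - 1 ∨ j = p - 1) ∧ a = x ^ i * y ^ j} =
        Subalgebra.toSubmodule (Subalgebra.center k A) ∧
      Module.finrank k ↥(Subalgebra.center k A) = ((p - 1) / e) ^ 2 + 2 * p - 1) ∧
    (LinearIndependent k (fun a : ↥{a : A | ∃ i : ℕ, p - e ≤ i ∧ i ≤ p - 1 ∧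
        (a = x ^ i * y ^ (p - 1) ∨ a = x ^ (p - 1) * y ^ i)} => (a : A)) ∧
      Submodule.span k {a : A | ∃ i : ℕ, p - e ≤ i ∧ i ≤ p - 1 ∧
        (a = x ^ i * y ^ (p - 1) ∨ a = x ^ (p - 1) * y ^ i)} = socCenter k A ∧
      Module.finrank k ↥(socCenter k A) = 2 * e - 1) ∧
    (∀ z : A, z ∈ Ideal.jacobson (⊥ : Ideal A) → z ∈ Subalgebra.center k A →
      z ∈ ((Submodule.restrictScalars k (Ideal.jacobson (⊥ : Ideal A))) ^ e :
        Submodule k A)) := by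
  classical
  have hp2 : 2 ≤ p := hp.two_le
  have he1 : 1 ≤ e := by omega
  have hep : e ≤ p - 1 := Nat.le_of_dvd (by omega) hediv
  -- the two index sets
  set T1 : Set (Fin p × Fin p) := {ij : Fin p × Fin p |
    (e ∣ (ij.1 : ℕ) ∧ e ∣ (ij.2 : ℕ)) ∨ (ij.1 : ℕ) = p - 1 ∨ (ij.2 : ℕ) = p - 1} with hT1
  set T2 : Set (Fin p × Fin p) := {ij : Fin p × Fin p |
    (p - e ≤ (ij.1 : ℕ) ∧ (ij.2 : ℕ) = p - 1) ∨
      ((ij.1 : ℕ) = p - 1 ∧ p - e ≤ (ij.2 : ℕ))} with hT2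
  have hS1 : {a : A | ∃ i j : ℕ, i < p ∧ j < p ∧
      ((e ∣ i ∧ e ∣ j) ∨ i = p - 1 ∨ j = p - 1) ∧ a = x ^ i * y ^ j} = ⇑b '' T1 := by
    ext a
    constructor
    · rintro ⟨i, j, hi, hj, hcond, rfl⟩
      exact ⟨(⟨i, hi⟩, ⟨j, hj⟩), hcond, by rw [hb]⟩
    · rintro ⟨⟨u, v⟩, hcond, rfl⟩
      exact ⟨(u : ℕ), (v : ℕ), u.isLt, v.isLt, hcond, hb _⟩
  have hS2 : {a : A | ∃ i : ℕ, p - e ≤ i ∧ i ≤ p - 1 ∧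
      (a = x ^ i * y ^ (p - 1) ∨ a = x ^ (p - 1) * y ^ i)} = ⇑b '' T2 := by
    ext a
    constructor
    · rintro ⟨i, hie, hip, (rfl | rfl)⟩
      · exact ⟨(⟨i, by omega⟩, ⟨p - 1, by omega⟩), Or.inl ⟨hie, rfl⟩, by rw [hb]⟩
      · exact ⟨(⟨p - 1, by omega⟩, ⟨i, by omega⟩), Or.inr ⟨rfl, hie⟩, by rw [hb]⟩
    · rintro ⟨⟨u, v⟩, (⟨h1, h2⟩ | ⟨h1, h2⟩), rfl⟩
      · refine ⟨(u : ℕ), h1, by have := u.isLt; omega, Or.inl ?_⟩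
        rw [hb]
        dsimp only
        rw [h2]
      · refine ⟨(v : ℕ), h2, by have := v.isLt; omega, Or.inr ?_⟩
        rw [hb]
        dsimp only
        rw [h1]
  -- span identities
  have hspan1 : Submodule.span k {a : A | ∃ i j : ℕ, i < p ∧ j < p ∧
      ((e ∣ i ∧ e ∣ j) ∨ i = p - 1 ∨ j = p - 1) ∧ a = x ^ i * y ^ j} =
      Subalgebra.toSubmodule (Subalgebra.center k A) := by
    apply le_antisymm
    · rw [Submodule.span_le]
      rintro a ⟨i, j, hi, hj, hcond, rfl⟩
      show x ^ i * y ^ j ∈ Subalgebra.center k A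
      exact qci_mono_central hx hy hyx hq hediv b hb hi hj hcond
    · intro z hz
      have hzc : z ∈ Subalgebra.center k A := hz
      rw [show z = ∑ uv : Fin p × Fin p, b.repr z uv • b uv from (b.sum_repr z).symm]
      apply Submodule.sum_mem
      rintro ⟨u, v⟩ -
      by_cases hC : (e ∣ (u : ℕ) ∧ e ∣ (v : ℕ)) ∨ (u : ℕ) = p - 1 ∨ (v : ℕ) = p - 1
      · apply Submodule.smul_mem
        apply Submodule.subset_span
        exact ⟨(u : ℕ), (v : ℕ), u.isLt, v.isLt, hC, hb _⟩
      · rw [qci_center_coords hp2 hx hy hyx hq hediv b hb hzc u v hC, zero_smul]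
        exact Submodule.zero_mem _
  have hspan2 : Submodule.span k {a : A | ∃ i : ℕ, p - e ≤ i ∧ i ≤ p - 1 ∧
      (a = x ^ i * y ^ (p - 1) ∨ a = x ^ (p - 1) * y ^ i)} = socCenter k A := by
    apply le_antisymm
    · rw [Submodule.span_le]
      rintro a ⟨i, hie, hip, (rfl | rfl)⟩
      · exact qci_soc_mono1 hp2 hx hy hyx hq he1 hediv b hb hie hip
      · exact qci_soc_mono2 hp2 hx hy hyx hq he1 hediv b hb hie hip
    · intro z hz
      rw [show z = ∑ uv : Fin p × Fin p, b.repr z uv • b uv from (b.sum_repr z).symm]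
      apply Submodule.sum_mem
      rintro ⟨u, v⟩ -
      by_cases hC : (p - e ≤ (u : ℕ) ∧ (v : ℕ) = p - 1) ∨
          ((u : ℕ) = p - 1 ∧ p - e ≤ (v : ℕ))
      · apply Submodule.smul_mem
        apply Submodule.subset_span
        rcases hC with ⟨h1, h2⟩ | ⟨h1, h2⟩
        · refine ⟨(u : ℕ), h1, by have := u.isLt; omega, Or.inl ?_⟩
          rw [hb]
          dsimp only
          rw [h2]
        · refine ⟨(v : ℕ), h2, by have := v.isLt; omega, Or.inr ?_⟩
          rw [hb]
          dsimp only
          rw [h1]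
      · rw [qci_soc_coords hp2 hx hy hyx hq he1 hediv b hb hz u v hC, zero_smul]
        exact Submodule.zero_mem _
  refine ⟨⟨?_, hspan1, ?_⟩, ⟨?_, hspan2, ?_⟩, ?_⟩
  · -- linear independence for the center basis
    apply (b.linearIndependent.linearIndepOn_id).mono
    rw [hS1]
    exact Set.image_subset_range _ _
  · -- finrank of the center
    have hF1 : (⇑b '' T1) = ((Finset.univ.filter fun ij : Fin p × Fin p =>
        (e ∣ (ij.1 : ℕ) ∧ e ∣ (ij.2 : ℕ)) ∨ (ij.1 : ℕ) = p - 1 ∨ (ij.2 : ℕ) = p - 1).image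
          ⇑b : Finset A) := by
      rw [Finset.coe_image]
      congr 1
      ext ij
      simp [hT1]
    have hLI1 : LinearIndependent k ((↑) : ↥(⇑b '' T1) → A) :=
      (b.linearIndependent.linearIndepOn_id).mono (Set.image_subset_range _ _)
    rw [← Subalgebra.finrank_toSubmodule, ← hspan1, hS1, hF1,
      finrank_span_finset_eq_card, Finset.card_image_of_injective _ b.injective,
      qci_card_center hp2 he1 hediv]
    apply (b.linearIndependent.linearIndepOn_id).mono
    intro a ha
    obtain ⟨ij, -, rfl⟩ := Finset.mem_image.mp ha
    exact Set.mem_range_self _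
  · -- linear independence for the socle basis
    apply (b.linearIndependent.linearIndepOn_id).mono
    rw [hS2]
    exact Set.image_subset_range _ _
  · -- finrank of the socle
    have hF2 : (⇑b '' T2) = ((Finset.univ.filter fun ij : Fin p × Fin p =>
        (p - e ≤ (ij.1 : ℕ) ∧ (ij.2 : ℕ) = p - 1) ∨
          ((ij.1 : ℕ) = p - 1 ∧ p - e ≤ (ij.2 : ℕ))).image ⇑b : Finset A) := by
      rw [Finset.coe_image]
      congr 1
      ext ij
      simp [hT2]
    have hLI2 : LinearIndependent k ((↑) : ↥(⇑b '' T2) → A) :=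
      (b.linearIndependent.linearIndepOn_id).mono (Set.image_subset_range _ _)
    rw [← hspan2, hS2, hF2, finrank_span_finset_eq_card,
      Finset.card_image_of_injective _ b.injective, qci_card_soc hp2 he1 hep]
    apply (b.linearIndependent.linearIndepOn_id).mono
    intro a ha
    obtain ⟨ij, -, rfl⟩ := Finset.mem_image.mp ha
    exact Set.mem_range_self _
  · -- J(A) ∩ Z(A) ⊆ J(A)^e
    intro z hzJ hzZ
    rw [qci_jacobson_eq hp2 b hx hy hyx hb] at hzJ
    have hz00 : b.repr z (⟨0, by omega⟩, ⟨0, by omega⟩) = 0 := hzJ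
    rw [show z = ∑ uv : Fin p × Fin p, b.repr z uv • b uv from (b.sum_repr z).symm]
    apply Submodule.sum_mem
    rintro ⟨u, v⟩ -
    by_cases hc : b.repr z (u, v) = 0
    · rw [hc, zero_smul]
      exact Submodule.zero_mem _
    · apply Submodule.smul_mem
      have hCuv : (e ∣ (u : ℕ) ∧ e ∣ (v : ℕ)) ∨ (u : ℕ) = p - 1 ∨ (v : ℕ) = p - 1 := by
        by_contra h
        exact hc (qci_center_coords hp2 hx hy hyx hq hediv b hb hzZ u v h)
      have huv0 : ¬((u : ℕ) = 0 ∧ (v : ℕ) = 0) := by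
        rintro ⟨h1, h2⟩
        exact hc (by rw [show ((u, v) : Fin p × Fin p) = (⟨0, by omega⟩, ⟨0, by omega⟩)
          from by ext <;> simpa] ; exact hz00)
      have hsum : e ≤ (u : ℕ) + (v : ℕ) := by
        rcases hCuv with ⟨h1, h2⟩ | h | h
        · rcases Nat.eq_zero_or_pos (u : ℕ) with hu0 | hupos
          · have hv1 : 1 ≤ (v : ℕ) := by omega
            have := Nat.le_of_dvd (by omega) h2
            omega
          · have := Nat.le_of_dvd hupos h1
            omega
        · omega
        · omega
      have hmem := qci_mono_mem_Jpow hp2 hx hy hyx b hb (e - 1) (u : ℕ) (v : ℕ) (by omega)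
      rw [show e - 1 + 1 = e by omega] at hmem
      rw [hb]
      exact hmem
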